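/- Let X be a graph with a finite homological isoperimetric function, and suppose H²_{(∞)}(X; ℓ∞(ℕ,ℝ)) = 0. Then for every sufficiently large natural number R there is a constant K ≥ 0 such that every bounded linear functional g: B_1^R(X) → ℝ (bounded with respect to the filling norm ‖·‖_F^R) extends to a linear functional G: C_1^R(X) → ℝ bounded with respect to the ℓ¹-norm, with operator norm ≤ K times the filling-norm of g. -/

import Mathlib

open Finsupp

variable {V : Type*}

/-- 0-chains. -/
abbrev C0 (V : Type*) := V →₀ ℝ
/-- 1-chains: free real vector space on ordered pairs of vertices. -/
abbrev C1 (V : Type*) := (V × V) →₀ ℝ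
/-- 2-chains: free real vector space on ordered triples of vertices. -/
abbrev C2 (V : Type*) := (V × V × V) →₀ ℝ
/-- 3-chains. -/
abbrev C3 (V : Type*) := (V × V × V × V) →₀ ℝ

/-- ℓ¹-norm of a finitely supported chain. -/
noncomputable def l1 {α : Type*} (c : α →₀ ℝ) : ℝ := c.support.sum fun t => |c t|

/-- Boundary map ∂ : C₂ → C₁, (x₀,x₁,x₂) ↦ (x₁,x₂) − (x₀,x₂) + (x₀,x₁). -/
noncomputable def bdry2 : C2 V →ₗ[ℝ] C1 V :=
  Finsupp.lsum ℝ fun t => LinearMap.toSpanSingleton ℝ (C1 V)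
    (single (t.2.1, t.2.2) 1 - single (t.1, t.2.2) 1 + single (t.1, t.2.1) 1)

/-- Boundary map ∂ : C₁ → C₀, (x₀,x₁) ↦ x₁ − x₀. -/
noncomputable def bdry1 : C1 V →ₗ[ℝ] C0 V :=
  Finsupp.lsum ℝ fun t => LinearMap.toSpanSingleton ℝ (C0 V)
    (single t.2 1 - single t.1 1)

/-- Boundary map ∂ : C₃ → C₂. -/
noncomputable def bdry3 : C3 V →ₗ[ℝ] C2 V :=
  Finsupp.lsum ℝ fun t => LinearMap.toSpanSingleton ℝ (C2 V)
    (single (t.2.1, t.2.2.1, t.2.2.2) 1 - single (t.1, t.2.2.1, t.2.2.2) 1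
      + single (t.1, t.2.1, t.2.2.2) 1 - single (t.1, t.2.1, t.2.2.1) 1)

/-- Two vertices are at (finite) distance at most R. -/
def pairOK (G : SimpleGraph V) (R : ℕ) (a b : V) : Prop :=
  G.Reachable a b ∧ G.dist a b ≤ R

/-- Membership in C₁^R : supported on pairs at distance ≤ R. -/
def memC1R (G : SimpleGraph V) (R : ℕ) (c : C1 V) : Prop :=
  ∀ t ∈ c.support, pairOK G R t.1 t.2

/-- Membership in C₂^R : supported on triples of diameter ≤ R. -/
def memC2R (G : SimpleGraph V) (R : ℕ) (c : C2 V) : Prop :=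
  ∀ t ∈ c.support, pairOK G R t.1 t.2.1 ∧ pairOK G R t.1 t.2.2 ∧ pairOK G R t.2.1 t.2.2

/-- Membership in B₁^R = ∂C₂^R. -/
def memB1R (G : SimpleGraph V) (R : ℕ) (b : C1 V) : Prop :=
  ∃ a : C2 V, memC2R G R a ∧ bdry2 a = b

/-- The filling norm ‖b‖_F^R = inf of ℓ¹-norms of fillings in C₂^R. -/
noncomputable def fillNorm (G : SimpleGraph V) (R : ℕ) (b : C1 V) : ℝ :=
  sInf {r | ∃ a : C2 V, memC2R G R a ∧ bdry2 a = b ∧ r = l1 a}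

/-- The 1-chain c(p) associated to a walk p. -/
noncomputable def walkChain (G : SimpleGraph V) {x y : V} (p : G.Walk x y) : C1 V :=
  (p.darts.map fun d => single d.toProd (1 : ℝ)).sum

/-- A walk is geodesic if its length realizes the distance of its endpoints. -/
def IsGeodesicWalk (G : SimpleGraph V) {x y : V} (p : G.Walk x y) : Prop :=
  p.length = G.dist x y

/-- Geodesic triangles of G are n-slim. -/
def SlimTriangles (G : SimpleGraph V) (n : ℕ) : Prop :=
  ∀ (x y z : V) (p : G.Walk x y) (q : G.Walk y z) (r : G.Walk x z),
    IsGeodesicWalk G p → IsGeodesicWalk G q → IsGeodesicWalk G r →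
    (∀ v ∈ p.support, ∃ w, (w ∈ q.support ∨ w ∈ r.support) ∧ G.dist v w ≤ n) ∧
    (∀ v ∈ q.support, ∃ w, (w ∈ p.support ∨ w ∈ r.support) ∧ G.dist v w ≤ n) ∧
    (∀ v ∈ r.support, ∃ w, (w ∈ p.support ∨ w ∈ q.support) ∧ G.dist v w ≤ n)

/-- A real chain has integer coefficients. -/
def IntCoeffs {α : Type*} (c : α →₀ ℝ) : Prop := ∀ t, ∃ n : ℤ, c t = n

/-- X has a finite homological isoperimetric function with parameters R₀, θ :
for every closed path p, c(p) ∈ B₁^{R₀} and ‖c(p)‖_F^{R₀} ≤ θ(length p). -/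
def FinHomIsop (G : SimpleGraph V) (R₀ : ℕ) (θ : ℕ → ℝ) : Prop :=
  ∀ (x : V) (p : G.Walk x x), memB1R G R₀ (walkChain G p) ∧
    fillNorm G R₀ (walkChain G p) ≤ θ p.length

/-- A 2-cochain is bounded on each C₂^R. -/
def Bdd2 {W : Type*} [NormedAddCommGroup W] [NormedSpace ℝ W]
    (G : SimpleGraph V) (f : C2 V →ₗ[ℝ] W) : Prop :=
  ∀ R : ℕ, ∃ M : ℝ, ∀ c : C2 V, memC2R G R c → ‖f c‖ ≤ M * l1 c

/-- A 1-cochain is bounded on each C₁^R. -/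
def Bdd1 {W : Type*} [NormedAddCommGroup W] [NormedSpace ℝ W]
    (G : SimpleGraph V) (f : C1 V →ₗ[ℝ] W) : Prop :=
  ∀ R : ℕ, ∃ M : ℝ, ∀ c : C1 V, memC1R G R c → ‖f c‖ ≤ M * l1 c

/-- A Banach space is 1-injective: bounded linear maps into it extend from
subspaces of normed spaces with the same norm. -/
def IsOneInjective (W : Type*) [NormedAddCommGroup W] [NormedSpace ℝ W] : Prop :=
  ∀ (E : Type) [NormedAddCommGroup E] [NormedSpace ℝ E],
    ∀ (p : Subspace ℝ E) (φ : p →L[ℝ] W),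
      ∃ ψ : E →L[ℝ] W, (∀ x : p, ψ x = φ x) ∧ ‖ψ‖ ≤ ‖φ‖

attribute [local instance] Classical.decEq

/-- C₁^R as a submodule of C₁. -/
noncomputable def C1Rsub (G : SimpleGraph V) (R : ℕ) : Submodule ℝ (C1 V) where
  carrier := {c | memC1R G R c}
  zero_mem' := fun t ht => absurd ht (by simp)
  add_mem' := by
    intro a b ha hb t ht
    rcases Finset.mem_union.1 (Finsupp.support_add ht) with h | h
    · exact ha t h
    · exact hb t h
  smul_mem' := by
    intro r a ha t ht
    exact ha t (Finsupp.support_smul ht)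

/-- B₁^R = ∂C₂^R as a submodule of C₁. -/
noncomputable def B1Rsub (G : SimpleGraph V) (R : ℕ) : Submodule ℝ (C1 V) where
  carrier := {b | memB1R G R b}
  zero_mem' := ⟨0, fun t ht => absurd ht (by simp), map_zero _⟩
  add_mem' := by
    rintro b₁ b₂ ⟨a₁, ha₁, rfl⟩ ⟨a₂, ha₂, rfl⟩
    refine ⟨a₁ + a₂, ?_, map_add _ _ _⟩
    intro t ht
    rcases Finset.mem_union.1 (Finsupp.support_add ht) with h | h
    · exact ha₁ t h
    · exact ha₂ t h
  smul_mem' := by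
    rintro r b ⟨a, ha, rfl⟩
    exact ⟨r • a, fun t ht => ha t (Finsupp.support_smul ht), map_smul _ _ _⟩
section AuxL1
variable {α β : Type*}

lemma l1_eq_sum {c : α →₀ ℝ} {s : Finset α} (h : c.support ⊆ s) :
    l1 c = ∑ t ∈ s, |c t| := by
  refine Finset.sum_subset h fun t _ ht => ?_
  rw [Finsupp.notMem_support_iff.1 ht, abs_zero]

lemma l1_nonneg (c : α →₀ ℝ) : 0 ≤ l1 c :=
  Finset.sum_nonneg fun t _ => abs_nonneg _

lemma l1_zero : l1 (0 : α →₀ ℝ) = 0 := by simp [l1]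

lemma l1_add (a b : α →₀ ℝ) : l1 (a + b) ≤ l1 a + l1 b := by
  classical
  rw [l1_eq_sum (s := a.support ∪ b.support) Finsupp.support_add,
      l1_eq_sum (s := a.support ∪ b.support) Finset.subset_union_left,
      l1_eq_sum (s := a.support ∪ b.support) Finset.subset_union_right,
      ← Finset.sum_add_distrib]
  exact Finset.sum_le_sum fun t _ => by simpa using abs_add_le (a t) (b t)

lemma l1_smul (r : ℝ) (c : α →₀ ℝ) : l1 (r • c) = |r| * l1 c := by
  classical
  rw [l1_eq_sum (s := c.support) Finsupp.support_smul, l1, Finset.mul_sum]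
  exact Finset.sum_congr rfl fun t _ => by simp [abs_mul]

lemma l1_neg (c : α →₀ ℝ) : l1 (-c) = l1 c := by
  simpa using l1_smul (-1) c

lemma l1_sub (a b : α →₀ ℝ) : l1 (a - b) ≤ l1 a + l1 b := by
  rw [sub_eq_add_neg]
  exact (l1_add a (-b)).trans (by rw [l1_neg])

lemma l1_single (t : α) (r : ℝ) : l1 (Finsupp.single t r) = |r| := by
  classical
  rw [l1_eq_sum (s := {t}) Finsupp.support_single_subset]
  simp

lemma l1_pos {c : α →₀ ℝ} (hc : c ≠ 0) : 0 < l1 c := by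
  obtain ⟨t, ht⟩ : ∃ t, c t ≠ 0 := by
    by_contra h
    push_neg at h
    exact hc (Finsupp.ext h)
  have htm : t ∈ c.support := Finsupp.mem_support_iff.2 ht
  have h1 : |c t| ≤ l1 c :=
    Finset.single_le_sum (f := fun t => |c t|) (fun _ _ => abs_nonneg _) htm
  have h0 : 0 < |c t| := abs_pos.2 ht
  linarith

lemma l1_sum_le (s : Finset β) (f : β → α →₀ ℝ) :
    l1 (∑ t ∈ s, f t) ≤ ∑ t ∈ s, l1 (f t) := by
  classical
  induction s using Finset.induction_on with
  | empty => simp [l1_zero]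
  | insert _ _ h ih =>
    rw [Finset.sum_insert h, Finset.sum_insert h]
    exact (l1_add _ _).trans (by linarith)

lemma l1_list_sum_le (L : List (α →₀ ℝ)) : l1 L.sum ≤ (L.map l1).sum := by
  induction L with
  | nil => simp [l1_zero]
  | cons a L ih =>
    simp only [List.sum_cons, List.map_cons]
    exact (l1_add _ _).trans (by linarith)

end AuxL1
section AuxBdry
variable {G : SimpleGraph V} {R R' : ℕ}

lemma bdry2_single (t : V × V × V) (r : ℝ) :
    bdry2 (single t r) = r • (single (t.2.1, t.2.2) (1:ℝ) - single (t.1, t.2.2) 1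
      + single (t.1, t.2.1) 1) := by
  simp [bdry2, Finsupp.lsum_single, LinearMap.toSpanSingleton_apply]

lemma bdry2_bdry3 (a : C3 V) : bdry2 (bdry3 a) = 0 := by
  induction a using Finsupp.induction_linear with
  | zero => simp
  | add a b ha hb => rw [map_add, map_add, ha, hb, add_zero]
  | single t r =>
    obtain ⟨x, y, z, w⟩ := t
    rw [bdry3, Finsupp.lsum_single, LinearMap.toSpanSingleton_apply, map_smul]
    rw [map_sub, map_add, map_sub, bdry2_single, bdry2_single, bdry2_single, bdry2_single]
    simp only [one_smul]
    have h : ∀ c : C1 V, c = 0 → r • c = 0 := fun c hc => by rw [hc, smul_zero]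
    refine h _ ?_
    abel

lemma pairOK_mono (h : R ≤ R') {a b : V} (hp : pairOK G R a b) : pairOK G R' a b :=
  ⟨hp.1, hp.2.trans h⟩

lemma memC2R_zero : memC2R G R (0 : C2 V) := fun t ht => absurd ht (by simp)

lemma memC2R_add {a b : C2 V} (ha : memC2R G R a) (hb : memC2R G R b) :
    memC2R G R (a + b) := by
  classical
  intro t ht
  rcases Finset.mem_union.1 (Finsupp.support_add ht) with h | h
  · exact ha t h
  · exact hb t h

lemma memC2R_smul (r : ℝ) {a : C2 V} (ha : memC2R G R a) : memC2R G R (r • a) :=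
  fun t ht => ha t (Finsupp.support_smul ht)

lemma memC2R_mono (h : R ≤ R') {a : C2 V} (ha : memC2R G R a) : memC2R G R' a :=
  fun t ht => ⟨pairOK_mono h (ha t ht).1, pairOK_mono h (ha t ht).2.1,
    pairOK_mono h (ha t ht).2.2⟩

lemma memB1R_mono (h : R ≤ R') {b : C1 V} (hb : memB1R G R b) : memB1R G R' b := by
  obtain ⟨a, ha, rfl⟩ := hb
  exact ⟨a, memC2R_mono h ha, rfl⟩

lemma memC1R_of_memB1R {b : C1 V} (hb : memB1R G R b) : memC1R G R b := by
  classical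
  obtain ⟨a, ha, rfl⟩ := hb
  intro s hs
  rw [bdry2, Finsupp.lsum_apply] at hs
  have := Finsupp.support_sum hs
  rw [Finset.mem_biUnion] at this
  obtain ⟨t, ht, hst⟩ := this
  rw [LinearMap.toSpanSingleton_apply] at hst
  have h2 := Finsupp.support_smul hst
  obtain ⟨h1, h2', h3'⟩ := ha t ht
  rcases Finset.mem_union.1 (Finsupp.support_add h2) with h | h
  · rcases Finset.mem_union.1 (Finsupp.support_sub h) with h' | h'
    · have := Finsupp.support_single_subset h'
      rw [Finset.mem_singleton] at this
      subst this
      exact h3'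
    · have := Finsupp.support_single_subset h'
      rw [Finset.mem_singleton] at this
      subst this
      exact h2'
  · have := Finsupp.support_single_subset h
    rw [Finset.mem_singleton] at this
    subst this
    exact h1

end AuxBdry
section AuxFill
variable {G : SimpleGraph V} {R R' : ℕ} {b b' : C1 V}

lemma fillSet_bddBelow (b : C1 V) :
    BddBelow {r | ∃ a : C2 V, memC2R G R a ∧ bdry2 a = b ∧ r = l1 a} :=
  ⟨0, by rintro r ⟨a, -, -, rfl⟩; exact l1_nonneg a⟩

lemma fillSet_nonempty (h : memB1R G R b) :
    Set.Nonempty {r | ∃ a : C2 V, memC2R G R a ∧ bdry2 a = b ∧ r = l1 a} := by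
  obtain ⟨a, ha, hab⟩ := h
  exact ⟨l1 a, a, ha, hab, rfl⟩

lemma fillNorm_nonneg (b : C1 V) : 0 ≤ fillNorm G R b :=
  Real.sInf_nonneg (by rintro r ⟨a, -, -, rfl⟩; exact l1_nonneg a)

lemma fillNorm_le {a : C2 V} (ha : memC2R G R a) (hab : bdry2 a = b) :
    fillNorm G R b ≤ l1 a :=
  csInf_le (fillSet_bddBelow b) ⟨a, ha, hab, rfl⟩

lemma exists_filling_lt (h : memB1R G R b) {ε : ℝ} (hε : 0 < ε) :
    ∃ a : C2 V, memC2R G R a ∧ bdry2 a = b ∧ l1 a < fillNorm G R b + ε := by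
  obtain ⟨r, ⟨a, ha, hab, rfl⟩, hlt⟩ := Real.lt_sInf_add_pos (fillSet_nonempty h) hε
  exact ⟨a, ha, hab, hlt⟩

lemma fillNorm_zero : fillNorm G R (0 : C1 V) = 0 :=
  le_antisymm (by simpa [l1_zero] using fillNorm_le (G := G) (R := R) memC2R_zero (map_zero _))
    (fillNorm_nonneg _)

lemma fillNorm_add (hb : memB1R G R b) (hb' : memB1R G R b') :
    fillNorm G R (b + b') ≤ fillNorm G R b + fillNorm G R b' := by
  refine le_of_forall_pos_le_add fun ε hε => ?_
  obtain ⟨a, ha, hab, hla⟩ := exists_filling_lt hb (half_pos hε)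
  obtain ⟨a', ha', hab', hla'⟩ := exists_filling_lt hb' (half_pos hε)
  have h1 : fillNorm G R (b + b') ≤ l1 (a + a') :=
    fillNorm_le (memC2R_add ha ha') (by rw [map_add, hab, hab'])
  have h2 := l1_add a a'
  linarith

lemma fillNorm_smul_le (r : ℝ) (hb : memB1R G R b) :
    fillNorm G R (r • b) ≤ |r| * fillNorm G R b := by
  rcases eq_or_ne r 0 with rfl | hr
  · simp [fillNorm_zero, fillNorm_nonneg]
  have hr' : 0 < |r| := abs_pos.2 hr
  refine le_of_forall_pos_le_add fun ε hε => ?_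
  obtain ⟨a, ha, hab, hla⟩ := exists_filling_lt hb (show 0 < ε / |r| by positivity)
  have h1 : fillNorm G R (r • b) ≤ l1 (r • a) :=
    fillNorm_le (memC2R_smul r ha) (by rw [map_smul, hab])
  rw [l1_smul] at h1
  have h2 : |r| * l1 a ≤ |r| * (fillNorm G R b + ε / |r|) :=
    mul_le_mul_of_nonneg_left hla.le (abs_nonneg r)
  have h3 : |r| * (fillNorm G R b + ε / |r|) = |r| * fillNorm G R b + ε := by
    field_simp
  linarith

lemma fillNorm_smul {r : ℝ} (hr : r ≠ 0) (hb : memB1R G R b) :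
    fillNorm G R (r • b) = |r| * fillNorm G R b := by
  refine le_antisymm (fillNorm_smul_le r hb) ?_
  have hb' : memB1R G R (r • b) := (B1Rsub G R).smul_mem r hb
  have h1 := fillNorm_smul_le r⁻¹ hb'
  rw [inv_smul_smul₀ hr] at h1
  have h2 : |r| * fillNorm G R b ≤ |r| * (|r⁻¹| * fillNorm G R (r • b)) :=
    mul_le_mul_of_nonneg_left h1 (abs_nonneg r)
  rw [abs_inv] at h2
  have hr' : |r| ≠ 0 := abs_ne_zero.2 hr
  calc |r| * fillNorm G R b ≤ |r| * (|r|⁻¹ * fillNorm G R (r • b)) := h2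
    _ = fillNorm G R (r • b) := by field_simp

lemma fillNorm_neg (hb : memB1R G R b) : fillNorm G R (-b) = fillNorm G R b := by
  have := fillNorm_smul (r := -1) (by norm_num) hb
  simpa using this

lemma fillNorm_mono (h : R ≤ R') (hb : memB1R G R b) :
    fillNorm G R' b ≤ fillNorm G R b := by
  refine csInf_le_csInf (fillSet_bddBelow b) (fillSet_nonempty hb) ?_
  rintro r ⟨a, ha, hab, rfl⟩
  exact ⟨a, memC2R_mono h ha, hab, rfl⟩

lemma fillNorm_sum_le {β : Type*} (s : Finset β) (f : β → C1 V)
    (hf : ∀ i ∈ s, memB1R G R (f i)) :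
    fillNorm G R (∑ i ∈ s, f i) ≤ ∑ i ∈ s, fillNorm G R (f i) := by
  classical
  induction s using Finset.induction_on with
  | empty => simp [fillNorm_zero]
  | @insert i s hi ih =>
    rw [Finset.sum_insert hi, Finset.sum_insert hi]
    have hmem : memB1R G R (∑ j ∈ s, f j) := by
      have : (∑ j ∈ s, f j) ∈ B1Rsub G R :=
        Submodule.sum_mem _ fun j hj => hf j (Finset.mem_insert_of_mem hj)
      exact this
    have h1 := fillNorm_add (hf i (Finset.mem_insert_self i s)) hmem
    have h2 := ih fun j hj => hf j (Finset.mem_insert_of_mem hj)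
    linarith

end AuxFill
section AuxWalk
variable {G : SimpleGraph V} {R R' : ℕ}

noncomputable def geod (G : SimpleGraph V) (hconn : G.Connected) (x y : V) : G.Walk x y :=
  (hconn.exists_walk_length_eq_dist x y).choose

lemma geod_length (hconn : G.Connected) (x y : V) :
    (geod G hconn x y).length = G.dist x y :=
  (hconn.exists_walk_length_eq_dist x y).choose_spec

lemma walkChain_nil (x : V) : walkChain G (SimpleGraph.Walk.nil : G.Walk x x) = 0 := by
  simp [walkChain]

lemma walkChain_cons {x u y : V} (h : G.Adj x u) (p : G.Walk u y) :
    walkChain G (SimpleGraph.Walk.cons h p) = single (x, u) 1 + walkChain G p := by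
  simp [walkChain, SimpleGraph.Walk.darts_cons]

lemma walkChain_append {x y z : V} (p : G.Walk x y) (q : G.Walk y z) :
    walkChain G (p.append q) = walkChain G p + walkChain G q := by
  simp [walkChain, SimpleGraph.Walk.darts_append]

lemma l1_walkChain {x y : V} (p : G.Walk x y) : l1 (walkChain G p) ≤ p.length := by
  refine (l1_list_sum_le _).trans ?_
  rw [List.map_map]
  have : ∀ d ∈ p.darts, (l1 ∘ fun d : G.Dart => single d.toProd (1:ℝ)) d = 1 := by
    intro d _
    simp [Function.comp, l1_single]
  rw [List.sum_eq_card_nsmul _ 1 (by simpa using this)]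
  simp [SimpleGraph.Walk.length_darts]

lemma pairOK_of_mem_support {x y u : V} (p : G.Walk x y) (hu : u ∈ p.support)
    (hlen : p.length ≤ R) : pairOK G R x u := by
  refine ⟨⟨p.takeUntil u hu⟩, ?_⟩
  exact le_trans (SimpleGraph.dist_le _) (le_trans (SimpleGraph.Walk.length_takeUntil_le p hu) hlen)

noncomputable def degChain (G : SimpleGraph V) (v : V) : {x y : V} → G.Walk x y → C2 V
  | _, _, SimpleGraph.Walk.nil => 0
  | _, _, @SimpleGraph.Walk.cons _ _ x u _ _ p => single (v, x, u) 1 + degChain G v p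

lemma bdry2_degChain (v : V) {x y : V} (p : G.Walk x y) :
    bdry2 (degChain G v p) = walkChain G p + single (v, x) 1 - single (v, y) 1 := by
  induction p with
  | nil => simp [degChain, walkChain_nil]
  | @cons x u y h p ih =>
    rw [degChain, map_add, ih, bdry2_single, walkChain_cons, one_smul]
    abel

lemma l1_degChain (v : V) {x y : V} (p : G.Walk x y) :
    l1 (degChain G v p) ≤ p.length := by
  induction p with
  | nil => simp [degChain, l1_zero]
  | @cons x u y h p ih =>
    rw [degChain]
    refine (l1_add _ _).trans ?_
    rw [l1_single]
    push_cast [SimpleGraph.Walk.length_cons]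
    simp only [abs_one]
    linarith

lemma memC2R_degChain (hR : 1 ≤ R) (v : V) {x y : V} (p : G.Walk x y)
    (hp : ∀ u ∈ p.support, pairOK G R v u) : memC2R G R (degChain G v p) := by
  classical
  induction p with
  | nil => exact memC2R_zero
  | @cons x u y h p ih =>
    rw [degChain]
    refine memC2R_add ?_ (ih fun w hw => hp w (by rw [SimpleGraph.Walk.support_cons]; right; exact hw))
    intro t ht
    have := Finsupp.support_single_subset ht
    rw [Finset.mem_singleton] at this
    subst this
    refine ⟨hp x (by rw [SimpleGraph.Walk.support_cons]; left), 
      hp u (by rw [SimpleGraph.Walk.support_cons]; right; exact p.start_mem_support), 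
      ⟨h.reachable, le_trans (SimpleGraph.dist_le h.toWalk) (by simpa using hR)⟩⟩

end AuxWalk
section AuxStr
variable {G : SimpleGraph V} {R R' : ℕ}

noncomputable def strMap (G : SimpleGraph V) (hconn : G.Connected) : C1 V →ₗ[ℝ] C1 V :=
  Finsupp.lsum ℝ fun t => LinearMap.toSpanSingleton ℝ (C1 V)
    (walkChain G (geod G hconn t.1 t.2))

lemma strMap_single (hconn : G.Connected) (t : V × V) (r : ℝ) :
    strMap G hconn (single t r) = r • walkChain G (geod G hconn t.1 t.2) := by
  simp [strMap, Finsupp.lsum_single, LinearMap.toSpanSingleton_apply]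

noncomputable def witMap (G : SimpleGraph V) (hconn : G.Connected) : C1 V →ₗ[ℝ] C2 V :=
  Finsupp.lsum ℝ fun t => LinearMap.toSpanSingleton ℝ (C2 V)
    (single (t.1, t.1, t.1) 1 - degChain G t.1 (geod G hconn t.1 t.2))

lemma witMap_single (hconn : G.Connected) (t : V × V) (r : ℝ) :
    witMap G hconn (single t r)
      = r • (single (t.1, t.1, t.1) 1 - degChain G t.1 (geod G hconn t.1 t.2)) := by
  simp [witMap, Finsupp.lsum_single, LinearMap.toSpanSingleton_apply]

lemma bdry2_witMap (hconn : G.Connected) (c : C1 V) :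
    bdry2 (witMap G hconn c) = c - strMap G hconn c := by
  induction c using Finsupp.induction_linear with
  | zero => simp
  | add a b ha hb => rw [map_add, map_add, map_add, ha, hb]; abel
  | single t r =>
    obtain ⟨x, y⟩ := t
    rw [witMap_single, strMap_single, map_smul, map_sub, bdry2_single, bdry2_degChain]
    have h1 : single ((x, y) : V × V) r = r • single ((x, y) : V × V) (1:ℝ) := by
      rw [Finsupp.smul_single, smul_eq_mul, mul_one]
    rw [h1, ← smul_sub]
    congr 1
    simp only [one_smul]
    abel

lemma memC2R_witMap (hconn : G.Connected) (hR : 1 ≤ R) {c : C1 V} (hc : memC1R G R c) :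
    memC2R G R (witMap G hconn c) := by
  classical
  intro t ht
  rw [witMap, Finsupp.lsum_apply] at ht
  have := Finsupp.support_sum ht
  rw [Finset.mem_biUnion] at this
  obtain ⟨s, hs, hts⟩ := this
  rw [LinearMap.toSpanSingleton_apply] at hts
  have h2 := Finsupp.support_smul hts
  have hsp := hc s hs
  have hgeod : ∀ u ∈ (geod G hconn s.1 s.2).support, pairOK G R s.1 u := fun u hu =>
    pairOK_of_mem_support _ hu (by rw [geod_length]; exact hsp.2)
  rcases Finset.mem_union.1 (Finsupp.support_sub h2) with h | h
  · have := Finsupp.support_single_subset h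
    rw [Finset.mem_singleton] at this
    subst this
    have hOK : pairOK G R s.1 s.1 := ⟨SimpleGraph.Reachable.refl _, by rw [SimpleGraph.dist_self]; exact Nat.zero_le _⟩
    exact ⟨hOK, hOK, hOK⟩
  · exact memC2R_degChain hR s.1 _ hgeod t h

lemma l1_witMap (hconn : G.Connected) {c : C1 V} (hc : memC1R G R c) :
    l1 (witMap G hconn c) ≤ (R + 1) * l1 c := by
  classical
  have hrw : witMap G hconn c = ∑ s ∈ c.support,
      (c s) • (single (s.1, s.1, s.1) (1:ℝ) - degChain G s.1 (geod G hconn s.1 s.2)) := by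
    rw [witMap, Finsupp.lsum_apply]
    rfl
  rw [hrw]
  refine (l1_sum_le _ _).trans ?_
  rw [l1, Finset.mul_sum]
  refine Finset.sum_le_sum fun s hs => ?_
  rw [l1_smul]
  have h1 : l1 (single (s.1, s.1, s.1) (1:ℝ) - degChain G s.1 (geod G hconn s.1 s.2))
      ≤ 1 + (geod G hconn s.1 s.2).length := by
    refine (l1_sub _ _).trans ?_
    have := l1_degChain s.1 (geod G hconn s.1 s.2)
    rw [l1_single, abs_one]
    linarith
  have h2 : ((geod G hconn s.1 s.2).length : ℝ) ≤ R := by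
    rw [geod_length]
    exact_mod_cast (hc s hs).2
  calc |c s| * l1 (single (s.1, s.1, s.1) (1:ℝ) - degChain G s.1 (geod G hconn s.1 s.2))
      ≤ |c s| * (R + 1) := by
        refine mul_le_mul_of_nonneg_left ?_ (abs_nonneg _)
        linarith
    _ = (R + 1) * |c s| := mul_comm _ _

end AuxStr
section AuxTri
variable {G : SimpleGraph V} {R R' R₀ : ℕ} {θ : ℕ → ℝ}

noncomputable def triP (G : SimpleGraph V) (hconn : G.Connected) (x y z : V) : G.Walk x x :=
  (geod G hconn x y).append ((geod G hconn y z).append (geod G hconn z x))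

noncomputable def triQ (G : SimpleGraph V) (hconn : G.Connected) (x z : V) : G.Walk x x :=
  (geod G hconn x z).append (geod G hconn z x)

lemma strMap_bdry2_single' (hconn : G.Connected) (x y z : V) :
    strMap G hconn (bdry2 (single (x, y, z) 1))
      = walkChain G (triP G hconn x y z) - walkChain G (triQ G hconn x z) := by
  rw [bdry2_single, one_smul, map_add, map_sub, strMap_single, strMap_single, strMap_single]
  simp only [one_smul]
  rw [triP, triQ, walkChain_append, walkChain_append, walkChain_append]
  abel

lemma memB1R_strMap_tri (hconn : G.Connected) (hfhif : FinHomIsop G R₀ θ) (hR0 : R₀ ≤ R)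
    (x y z : V) : memB1R G R (strMap G hconn (bdry2 (single (x, y, z) 1))) := by
  rw [strMap_bdry2_single']
  exact (B1Rsub G R).sub_mem (memB1R_mono hR0 (hfhif x (triP G hconn x y z)).1)
    (memB1R_mono hR0 (hfhif x (triQ G hconn x z)).1)

lemma theta_le_sum {m : ℕ} (h : m ≤ 3 * R') :
    θ m ≤ ∑ k ∈ Finset.range (3 * R' + 1), max (θ k) 0 :=
  le_trans (le_max_left _ _) (Finset.single_le_sum (f := fun k => max (θ k) 0)
    (fun _ _ => le_max_right _ _) (Finset.mem_range.2 (Nat.lt_succ_of_le h)))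

lemma sum_maxtheta_nonneg : 0 ≤ ∑ k ∈ Finset.range (3 * R' + 1), max (θ k) 0 :=
  Finset.sum_nonneg fun _ _ => le_max_right _ _

lemma fillNorm_strMap_tri (hconn : G.Connected) (hfhif : FinHomIsop G R₀ θ) (hR0 : R₀ ≤ R)
    {x y z : V} (h1 : pairOK G R' x y) (h2 : pairOK G R' x z) (h3 : pairOK G R' y z) :
    fillNorm G R (strMap G hconn (bdry2 (single (x, y, z) 1)))
      ≤ 2 * ∑ m ∈ Finset.range (3 * R' + 1), max (θ m) 0 := by
  have hP := hfhif x (triP G hconn x y z)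
  have hQ := hfhif x (triQ G hconn x z)
  have hPlen : (triP G hconn x y z).length ≤ 3 * R' := by
    rw [triP]
    simp only [SimpleGraph.Walk.length_append, geod_length]
    have e1 : G.dist z x = G.dist x z := SimpleGraph.dist_comm
    have b1 := h1.2; have b2 := h2.2; have b3 := h3.2
    omega
  have hQlen : (triQ G hconn x z).length ≤ 3 * R' := by
    rw [triQ]
    simp only [SimpleGraph.Walk.length_append, geod_length]
    have e1 : G.dist z x = G.dist x z := SimpleGraph.dist_comm
    have b2 := h2.2
    omega
  have hPf : fillNorm G R (walkChain G (triP G hconn x y z))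
      ≤ ∑ m ∈ Finset.range (3 * R' + 1), max (θ m) 0 :=
    le_trans (fillNorm_mono hR0 hP.1) (le_trans hP.2 (theta_le_sum hPlen))
  have hQf : fillNorm G R (walkChain G (triQ G hconn x z))
      ≤ ∑ m ∈ Finset.range (3 * R' + 1), max (θ m) 0 :=
    le_trans (fillNorm_mono hR0 hQ.1) (le_trans hQ.2 (theta_le_sum hQlen))
  rw [strMap_bdry2_single', sub_eq_add_neg]
  have hPm := memB1R_mono hR0 hP.1
  have hQm := memB1R_mono hR0 hQ.1
  have hadd := fillNorm_add (G := G) (R := R) hPm ((B1Rsub G R).neg_mem hQm)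
  rw [fillNorm_neg hQm] at hadd
  linarith

lemma fillNorm_strMap_bdry2 (hconn : G.Connected) (hfhif : FinHomIsop G R₀ θ) (hR0 : R₀ ≤ R)
    {a : C2 V} (ha : memC2R G R' a) :
    fillNorm G R (strMap G hconn (bdry2 a))
      ≤ (2 * ∑ m ∈ Finset.range (3 * R' + 1), max (θ m) 0) * l1 a := by
  classical
  have hrw : strMap G hconn (bdry2 a)
      = ∑ t ∈ a.support, (a t) • strMap G hconn (bdry2 (single t 1)) := by
    conv_lhs => rw [← Finsupp.sum_single a]
    rw [Finsupp.sum, map_sum, map_sum]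
    refine Finset.sum_congr rfl fun t ht => ?_
    rw [show (single t (a t) : C2 V) = (a t) • single t 1 by
      rw [Finsupp.smul_single, smul_eq_mul, mul_one], map_smul, map_smul]
  rw [hrw]
  refine (fillNorm_sum_le _ _ fun t ht => (B1Rsub G R).smul_mem _
    (memB1R_strMap_tri hconn hfhif hR0 t.1 t.2.1 t.2.2)).trans ?_
  rw [l1, Finset.mul_sum]
  refine Finset.sum_le_sum fun t ht => ?_
  have hsm := fillNorm_smul_le (G := G) (R := R) (a t)
    (memB1R_strMap_tri hconn hfhif hR0 t.1 t.2.1 t.2.2)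
  obtain ⟨hp1, hp2, hp3⟩ := ha t ht
  have h2 := fillNorm_strMap_tri (R' := R') hconn hfhif hR0 hp1 hp2 hp3
  calc fillNorm G R ((a t) • strMap G hconn (bdry2 (single (t.1, t.2.1, t.2.2) 1)))
      ≤ |a t| * fillNorm G R (strMap G hconn (bdry2 (single (t.1, t.2.1, t.2.2) 1))) := hsm
    _ ≤ |a t| * (2 * ∑ m ∈ Finset.range (3 * R' + 1), max (θ m) 0) :=
        mul_le_mul_of_nonneg_left h2 (abs_nonneg _)
    _ = (2 * ∑ m ∈ Finset.range (3 * R' + 1), max (θ m) 0) * |a t| := mul_comm _ _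

end AuxTri
section AuxHB
variable {G : SimpleGraph V} {R : ℕ}

lemma exists_hb (b : C1 V) (hbB : memB1R G R b) (hbne : b ≠ 0) :
    ∃ h : B1Rsub G R →ₗ[ℝ] ℝ, h ⟨b, hbB⟩ = fillNorm G R b ∧
      ∀ z : B1Rsub G R, h z ≤ fillNorm G R (z : C1 V) := by
  set x : B1Rsub G R := ⟨b, hbB⟩ with hxdef
  have hxne : x ≠ 0 := fun hh => hbne (by simpa [hxdef] using congrArg Subtype.val hh)
  set f : (B1Rsub G R) →ₗ.[ℝ] ℝ :=
    LinearPMap.mkSpanSingleton x (fillNorm G R b) hxne with hfdef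
  have Nhom : ∀ c : ℝ, 0 < c → ∀ z : B1Rsub G R,
      fillNorm G R ((c • z : B1Rsub G R) : C1 V) = c * fillNorm G R (z : C1 V) := by
    intro c hc z
    rw [Submodule.coe_smul, fillNorm_smul (ne_of_gt hc) z.2, abs_of_pos hc]
  have Nadd : ∀ z w : B1Rsub G R,
      fillNorm G R ((z + w : B1Rsub G R) : C1 V)
        ≤ fillNorm G R (z : C1 V) + fillNorm G R (w : C1 V) := by
    intro z w
    rw [Submodule.coe_add]
    exact fillNorm_add z.2 w.2
  have hf : ∀ zz : f.domain, f zz ≤ fillNorm G R ((zz : B1Rsub G R) : C1 V) := by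
    rintro ⟨z, hz⟩
    have hz' : z ∈ Submodule.span ℝ {x} := hz
    obtain ⟨c, hc⟩ := Submodule.mem_span_singleton.1 hz'
    have hzeq : (⟨z, hz⟩ : f.domain) = ⟨c • x, hc ▸ hz⟩ := Subtype.ext hc.symm
    rw [hzeq]
    have happ : f ⟨c • x, hc ▸ hz⟩ = c • fillNorm G R b :=
      LinearPMap.mkSpanSingleton'_apply _ _ _ c _
    rw [happ, Submodule.coe_smul, smul_eq_mul]
    rcases eq_or_ne c 0 with rfl | hc0
    · rw [zero_mul, zero_smul, fillNorm_zero]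
    · have hcoz : ((x : C1 V)) = b := rfl
      rw [hcoz, fillNorm_smul hc0 hbB]
      have h1 : c ≤ |c| := le_abs_self c
      have h2 := fillNorm_nonneg (G := G) (R := R) b
      nlinarith
  obtain ⟨h, hext, hle⟩ := exists_extension_of_le_sublinear f
    (fun z : B1Rsub G R => fillNorm G R (z : C1 V)) Nhom Nadd hf
  refine ⟨h, ?_, hle⟩
  have hmem : x ∈ f.domain := Submodule.mem_span_singleton_self _
  have h2 := hext ⟨_, hmem⟩
  exact h2.trans (LinearPMap.mkSpanSingleton_apply ℝ ℝ hxne _)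

end AuxHB
section AuxLII
set_option maxHeartbeats 1000000

lemma linear_iso (G : SimpleGraph V) (hconn : G.Connected)
    (R₀ : ℕ) (θ : ℕ → ℝ) (hfhif : FinHomIsop G R₀ θ)
    (hvan : ∀ f : C2 V →ₗ[ℝ] lp (fun _ : ℕ => ℝ) ⊤,
      Bdd2 G f → (∀ a : C3 V, f (bdry3 a) = 0) →
      ∃ g : C1 V →ₗ[ℝ] lp (fun _ : ℕ => ℝ) ⊤, Bdd1 G g ∧ f = g.comp bdry2)
    (R : ℕ) (hR0 : R₀ ≤ R) (hR1 : 1 ≤ R) :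
    ∃ K : ℝ, 0 ≤ K ∧ ∀ b : C1 V, memB1R G R b → fillNorm G R b ≤ K * l1 b := by
  by_contra hcon
  push_neg at hcon
  choose b hbB hbgt using fun n : ℕ => hcon n (Nat.cast_nonneg n)
  have hbne : ∀ n, b n ≠ 0 := by
    intro n h0
    have := hbgt n
    rw [h0, l1_zero, mul_zero, fillNorm_zero] at this
    exact lt_irrefl 0 this
  choose h hval hle using fun n : ℕ => exists_hb (b n) (hbB n) (hbne n)
  have hTmem : ∀ a : C2 V, strMap G hconn (bdry2 a) ∈ B1Rsub G R := by
    intro a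
    induction a using Finsupp.induction_linear with
    | zero => rw [map_zero, map_zero]; exact (B1Rsub G R).zero_mem
    | add a c ha hc => rw [map_add, map_add]; exact (B1Rsub G R).add_mem ha hc
    | single t r =>
      rw [show (single t r : C2 V) = r • single t 1 by
        rw [Finsupp.smul_single, smul_eq_mul, mul_one], map_smul, map_smul]
      exact (B1Rsub G R).smul_mem r (memB1R_strMap_tri hconn hfhif hR0 t.1 t.2.1 t.2.2)
  set T : C2 V →ₗ[ℝ] B1Rsub G R :=
    LinearMap.codRestrict (B1Rsub G R) ((strMap G hconn).comp bdry2) hTmem with hT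
  have hzbd : ∀ (z : B1Rsub G R) (n : ℕ), ‖h n z‖ ≤ fillNorm G R (z : C1 V) := by
    intro z n
    rw [Real.norm_eq_abs, abs_le]
    have hle1 := hle n z
    have hle2 := hle n (-z)
    have e1 : (h n) (-z) = -((h n) z) := map_neg (h n) z
    have e2 : ((-z : B1Rsub G R) : C1 V) = -((z : B1Rsub G R) : C1 V) := rfl
    have e3 := fillNorm_neg (G := G) (R := R) z.2
    rw [e1, e2, e3] at hle2
    constructor <;> linarith
  let A : B1Rsub G R →ₗ[ℝ] lp (fun _ : ℕ => ℝ) ⊤ :=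
    { toFun := fun z => ⟨fun n => h n z, memℓp_infty
        ⟨fillNorm G R (z : C1 V), by rintro - ⟨n, rfl⟩; exact hzbd z n⟩⟩
      map_add' := fun z w => by
        apply lp.ext
        rw [lp.coeFn_add]
        funext n
        show h n (z + w) = h n z + h n w
        rw [map_add]
      map_smul' := fun c z => by
        apply lp.ext
        rw [lp.coeFn_smul]
        funext n
        show h n (c • z) = c • h n z
        rw [map_smul] }
  let F : C2 V →ₗ[ℝ] lp (fun _ : ℕ => ℝ) ⊤ := A.comp T
  have hFB : Bdd2 G F := by
    intro R'
    refine ⟨2 * ∑ m ∈ Finset.range (3 * R' + 1), max (θ m) 0, fun c hc => ?_⟩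
    have hb1 := fillNorm_strMap_bdry2 (R := R) hconn hfhif hR0 hc
    refine lp.norm_le_of_forall_le (le_trans (fillNorm_nonneg _) hb1) ?_
    intro n
    show ‖h n (T c)‖ ≤ _
    exact le_trans (hzbd (T c) n) hb1
  have hFz : ∀ a : C3 V, F (bdry3 a) = 0 := by
    intro a
    have hT0 : T (bdry3 a) = 0 := by
      apply Subtype.ext
      show strMap G hconn (bdry2 (bdry3 a)) = 0
      rw [bdry2_bdry3, map_zero]
    show A (T (bdry3 a)) = 0
    rw [hT0, map_zero]
  obtain ⟨g, hgB, hFg⟩ := hvan F hFB hFz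
  obtain ⟨M, hM⟩ := hgB R
  obtain ⟨n, hn⟩ := exists_nat_gt (M + (R + 1))
  obtain ⟨a, haC, haB⟩ := hbB n
  set x : B1Rsub G R := ⟨b n, hbB n⟩ with hxdef
  have hcoord : h n (T a) = (g (bdry2 a) : ∀ _ : ℕ, ℝ) n := by
    have hFa : F a = g (bdry2 a) := by rw [hFg]; rfl
    rw [← hFa]
    rfl
  have hβC : memC1R G R (b n) := memC1R_of_memB1R (hbB n)
  have hTa : h n (T a) ≤ M * l1 (b n) := by
    rw [hcoord]
    refine le_trans (le_abs_self _) ?_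
    rw [← Real.norm_eq_abs]
    refine le_trans (lp.norm_apply_le_norm ENNReal.top_ne_zero (g (bdry2 a)) n) ?_
    rw [haB]
    exact hM (b n) hβC
  have hwitmem : memC2R G R (witMap G hconn (b n)) := memC2R_witMap hconn hR1 hβC
  have hwit : fillNorm G R (b n - strMap G hconn (b n)) ≤ (R + 1) * l1 (b n) :=
    le_trans (fillNorm_le hwitmem (bdry2_witMap hconn (b n))) (l1_witMap hconn hβC)
  have hco2 : ((x - T a : B1Rsub G R) : C1 V) = b n - strMap G hconn (b n) := by
    rw [Submodule.coe_sub]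
    have : ((T a : B1Rsub G R) : C1 V) = strMap G hconn (bdry2 a) := rfl
    rw [this, haB, hxdef]
  have h1 : h n (x - T a) ≤ (R + 1) * l1 (b n) := by
    refine le_trans (hle n (x - T a)) ?_
    rw [hco2]
    exact hwit
  have hsplit : h n x = h n (x - T a) + h n (T a) := by
    have hxx : x - T a + T a = x := by abel
    rw [← map_add, hxx]
  have hvx : fillNorm G R (b n) = h n x := (hval n).symm
  have hl1pos := l1_pos (hbne n)
  have hfb := hbgt n
  have hup : fillNorm G R (b n) ≤ (M + (R + 1)) * l1 (b n) := by
    rw [hvx, hsplit]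
    nlinarith
  have hlt : (n : ℝ) * l1 (b n) < (M + (R + 1)) * l1 (b n) := lt_of_lt_of_le hfb hup
  have := lt_of_mul_lt_mul_right hlt hl1pos.le
  linarith

end AuxLII
/-- if X has a finite homological isoperimetric function and
H²_{(∞)}(X;ℓ∞(ℕ,ℝ)) = 0, then for all large R there is K ≥ 0 such that every
functional on B₁^R bounded w.r.t. the filling norm extends to a functional on
C₁^R bounded w.r.t. ℓ¹, with operator norm ≤ K times the filling-norm bound. -/
theorem uniform_extension (G : SimpleGraph V) (hconn : G.Connected)
    (R₀ : ℕ) (θ : ℕ → ℝ) (hfhif : FinHomIsop G R₀ θ)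
    (hvan : ∀ f : C2 V →ₗ[ℝ] lp (fun _ : ℕ => ℝ) ⊤,
      Bdd2 G f → (∀ a : C3 V, f (bdry3 a) = 0) →
      ∃ g : C1 V →ₗ[ℝ] lp (fun _ : ℕ => ℝ) ⊤, Bdd1 G g ∧ f = g.comp bdry2) :
    ∃ R₁ : ℕ, ∀ R, R₁ ≤ R → ∃ K : ℝ, 0 ≤ K ∧
      ∀ (g : B1Rsub G R →ₗ[ℝ] ℝ) (Mg : ℝ), 0 ≤ Mg →
        (∀ b : B1Rsub G R, ‖g b‖ ≤ Mg * fillNorm G R (b : C1 V)) →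
        ∃ Gl : C1Rsub G R →ₗ[ℝ] ℝ,
          (∀ (b : B1Rsub G R) (hb : (b : C1 V) ∈ C1Rsub G R), Gl ⟨b, hb⟩ = g b) ∧
          ∀ c : C1Rsub G R, ‖Gl c‖ ≤ K * Mg * l1 (c : C1 V) := by
  refine ⟨max R₀ 1, fun R hR => ?_⟩
  have hR0 : R₀ ≤ R := le_trans (le_max_left _ _) hR
  have hR1 : 1 ≤ R := le_trans (le_max_right _ _) hR
  obtain ⟨K, hK0, hK⟩ := linear_iso G hconn R₀ θ hfhif hvan R hR0 hR1
  refine ⟨K, hK0, fun g Mg hMg hg => ?_⟩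
  set p : Submodule ℝ (C1Rsub G R) := (B1Rsub G R).comap (C1Rsub G R).subtype with hp
  have hmem : ∀ z : p, ((C1Rsub G R).subtype.comp p.subtype) z ∈ B1Rsub G R := fun z => z.2
  set incl : p →ₗ[ℝ] B1Rsub G R :=
    LinearMap.codRestrict (B1Rsub G R) ((C1Rsub G R).subtype.comp p.subtype) hmem with hincl
  have hKMg : 0 ≤ K * Mg := mul_nonneg hK0 hMg
  have Nhom : ∀ c : ℝ, 0 < c → ∀ z : C1Rsub G R,
      K * Mg * l1 ((c • z : C1Rsub G R) : C1 V) = c * (K * Mg * l1 (z : C1 V)) := by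
    intro c hc z
    rw [Submodule.coe_smul, l1_smul, abs_of_pos hc]
    ring
  have Nadd : ∀ z w : C1Rsub G R,
      K * Mg * l1 ((z + w : C1Rsub G R) : C1 V)
        ≤ K * Mg * l1 (z : C1 V) + K * Mg * l1 (w : C1 V) := by
    intro z w
    rw [Submodule.coe_add]
    have h1 := l1_add (z : C1 V) (w : C1 V)
    calc K * Mg * l1 ((z : C1 V) + (w : C1 V)) ≤ K * Mg * (l1 (z : C1 V) + l1 (w : C1 V)) :=
          mul_le_mul_of_nonneg_left h1 hKMg
      _ = K * Mg * l1 (z : C1 V) + K * Mg * l1 (w : C1 V) := by ring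
  have hf : ∀ zz : (⟨p, g.comp incl⟩ : (C1Rsub G R) →ₗ.[ℝ] ℝ).domain,
      (⟨p, g.comp incl⟩ : (C1Rsub G R) →ₗ.[ℝ] ℝ) zz ≤ K * Mg * l1 ((zz : C1Rsub G R) : C1 V) := by
    rintro ⟨z, hz⟩
    show g (incl ⟨z, hz⟩) ≤ _
    have h2 := hg (incl ⟨z, hz⟩)
    have hco : ((incl ⟨z, hz⟩ : B1Rsub G R) : C1 V) = (z : C1 V) := rfl
    rw [hco] at h2
    have h3 : fillNorm G R (z : C1 V) ≤ K * l1 (z : C1 V) :=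
      hK (z : C1 V) (Submodule.mem_comap.1 hz)
    have h4 : g (incl ⟨z, hz⟩) ≤ ‖g (incl ⟨z, hz⟩)‖ := by
      rw [Real.norm_eq_abs]
      exact le_abs_self _
    calc g (incl ⟨z, hz⟩) ≤ ‖g (incl ⟨z, hz⟩)‖ := h4
      _ ≤ Mg * fillNorm G R (z : C1 V) := h2
      _ ≤ Mg * (K * l1 (z : C1 V)) := mul_le_mul_of_nonneg_left h3 hMg
      _ = K * Mg * l1 (z : C1 V) := by ring
  obtain ⟨Gl, hext, hle⟩ := exists_extension_of_le_sublinear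
    (⟨p, g.comp incl⟩ : (C1Rsub G R) →ₗ.[ℝ] ℝ)
    (fun z : C1Rsub G R => K * Mg * l1 (z : C1 V)) Nhom Nadd hf
  refine ⟨Gl, ?_, ?_⟩
  · intro bb hb
    have hbm : (⟨(bb : C1 V), hb⟩ : C1Rsub G R) ∈ p := Submodule.mem_comap.2 bb.2
    have h5 := hext ⟨⟨(bb : C1 V), hb⟩, hbm⟩
    rw [h5]
    show g (incl ⟨⟨(bb : C1 V), hb⟩, hbm⟩) = g bb
    congr 1
  · intro c
    rw [Real.norm_eq_abs, abs_le]
    have hle1 := hle c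
    have hle2 := hle (-c)
    have e1 : Gl (-c) = -(Gl c) := map_neg Gl c
    have e2 : ((-c : C1Rsub G R) : C1 V) = -((c : C1Rsub G R) : C1 V) := rfl
    rw [e1, e2, l1_neg] at hle2
    constructor <;> linarith
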